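/- Let R be an algebraically closed field, a, b ∈ R nonzero, and k ≥ 2 an integer. Set initial values for the tau-function equation f_{t,n} = (−f_{t−2,n−2} f_{t−1,n}^k f_{t,n−1}^k + a f_{t−1,n−1}^{k²−1} f_{t,n−2}^{k²} f_{t−1,n}^k f_{t−2,n−1}^k + b f_{t−1,n−1}^{k²−1} f_{t−2,n}^{k²} f_{t,n−1}^k f_{t−1,n−2}^k)/(f_{t−2,n−1}^k f_{t−1,n−2}^k) on the first quadrant as: f_{01}=f_{02}=f_{10}=f_{11}=f_{12}=f_{13}=f_{14}=f_{21}=1, f_{03} = b^{−1/k²}, f_{04} = γ, f_{20} = δ, and f_{00} an indeterminate, where γ^{k²} ≠ 1/b and δ^{k²} ≠ −b/a. Then f_{22} = −f_{00} + a δ^{k²} + b (a degree-one, non-unit polynomial in f_{00}), f_{23} = a, and f_{24} = a^k b^{1/k}(b γ^{k²} − 1) + a·f_{22}^{k²}; in particular f_{22} does not divide f_{24}. -/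

import Mathlib

open Polynomial

/-- Step 8 of Theorem B.6: Over an algebraically closed field `R`, with
`a, b ≠ 0`, `k ≥ 2`, initial values `f₀₁=f₀₂=f₁₀=f₁₁=f₁₂=f₁₃=f₁₄=f₂₁=1`, `f₀₃ = β`
(a fixed root with `β^{k²} = b⁻¹`, so `b^{1/k} = (β^k)⁻¹`), `f₀₄ = γ`, `f₂₀ = δ`, and
`f₀₀` an indeterminate, where `γ^{k²} ≠ 1/b` and `δ^{k²} ≠ −b/a`: the iterates of the
tau-function equation satisfy `f₂₂ = −f₀₀ + a δ^{k²} + b` (degree one and not a unit as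
a polynomial in `f₀₀`), `f₂₃ = a`, and
`f₂₄ = a^k b^{1/k}(b γ^{k²} − 1) + a f₂₂^{k²}`; in particular `f₂₂ ∤ f₂₄`. -/
theorem stmt17 {R : Type*} [Field R] [IsAlgClosed R]
    (k : ℕ) (hk : 2 ≤ k) (a b γ δ β : R) (ha : a ≠ 0) (hb : b ≠ 0)
    (hβ : β ^ (k ^ 2) = b⁻¹) (hγ : γ ^ (k ^ 2) ≠ 1 / b) (hδ : δ ^ (k ^ 2) ≠ -b / a)
    (f₂₂ f₂₃ f₂₄ : R[X])
    -- the tau-function equation at (2,2), (2,3), (2,4) after substituting the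
    -- initial values (the factors equal to 1 are omitted):
    (h₂₂ : f₂₂ = -X + C (a * δ ^ (k ^ 2)) + C b)
    (h₂₃ : f₂₃ = -f₂₂ ^ k + C a + C (b * β ^ (k ^ 2)) * f₂₂ ^ k)
    (h₂₄ : f₂₄ * C (β ^ k) =
      -f₂₃ ^ k + C a * f₂₂ ^ (k ^ 2) * C (β ^ k) + C (b * γ ^ (k ^ 2)) * f₂₃ ^ k) :
    f₂₂ = -X + C (a * δ ^ (k ^ 2) + b) ∧ f₂₂.natDegree = 1 ∧ ¬ IsUnit f₂₂ ∧
      f₂₃ = C a ∧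
      f₂₄ = C (a ^ k * (β ^ k)⁻¹ * (b * γ ^ (k ^ 2) - 1)) + C a * f₂₂ ^ (k ^ 2) ∧
      ¬ f₂₂ ∣ f₂₄ := by
  have hβ0 : β ≠ 0 := by
    intro h
    rw [h, zero_pow (by positivity)] at hβ
    exact hb (by simpa using hβ.symm)
  have hβk : β ^ k ≠ 0 := pow_ne_zero _ hβ0
  have h22 : f₂₂ = -X + C (a * δ ^ (k ^ 2) + b) := by rw [h₂₂, C_add, add_assoc]
  have hdeg : f₂₂.natDegree = 1 := by
    rw [h22]
    compute_degree!
  have hnu : ¬ IsUnit f₂₂ := by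
    intro h
    have := natDegree_eq_zero_of_isUnit h
    omega
  have h23 : f₂₃ = C a := by
    rw [h₂₃, hβ, mul_inv_cancel₀ hb, C_1, one_mul]
    ring
  have hc : a ^ k * (β ^ k)⁻¹ * (b * γ ^ (k ^ 2) - 1) ≠ 0 := by
    apply mul_ne_zero (mul_ne_zero (pow_ne_zero _ ha) (inv_ne_zero hβk))
    intro h
    apply hγ
    field_simp
    linear_combination h
  have hβC : (C (β ^ k) : R[X]) ≠ 0 := by
    rw [Ne, C_eq_zero]; exact hβk
  have keyC : (C (a ^ k * (β ^ k)⁻¹ * (b * γ ^ (k ^ 2) - 1)) : R[X]) * C (β ^ k)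
      = C (b * γ ^ (k ^ 2)) * C (a ^ k) - C (a ^ k) := by
    rw [← C_mul, ← C_mul, ← C_sub]
    congr 1
    field_simp
  have h24 : f₂₄ = C (a ^ k * (β ^ k)⁻¹ * (b * γ ^ (k ^ 2) - 1)) + C a * f₂₂ ^ (k ^ 2) := by
    apply mul_right_cancel₀ hβC
    rw [h₂₄, h23, ← C_pow]
    linear_combination -keyC
  refine ⟨h22, hdeg, hnu, h23, h24, ?_⟩
  intro hdvd
  have hd2 : f₂₂ ∣ C a * f₂₂ ^ (k ^ 2) :=
    Dvd.dvd.mul_left (dvd_pow_self f₂₂ (by positivity)) _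
  have h' : f₂₄ - C a * f₂₂ ^ (k ^ 2) = C (a ^ k * (β ^ k)⁻¹ * (b * γ ^ (k ^ 2) - 1)) := by
    rw [h24]; ring
  have hdC : f₂₂ ∣ C (a ^ k * (β ^ k)⁻¹ * (b * γ ^ (k ^ 2) - 1)) := h' ▸ dvd_sub hdvd hd2
  have hle := natDegree_le_of_dvd hdC (by rw [Ne, C_eq_zero]; exact hc)
  rw [natDegree_C] at hle
  omega
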